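/- Let T_n = R_1 + ... + R_n where R_1, R_2, ... are i.i.d. ℕ-valued random variables with P(R_k = m) = c(φ,m) for a Bernstein function φ as above with φ(1) = 1. Then for all t ≥ 0 and n ∈ ℕ, E[e^{-t T_n}] ≤ e^{-n φ(t)}. -/

import Mathlib

set_option maxHeartbeats 1000000

open MeasureTheory Set ProbabilityTheory
open scoped ENNReal NNReal


private lemma aux_one_sub_exp_le_min {z : ℝ} (hz : 0 ≤ z) : 1 - Real.exp (-z) ≤ min 1 z := by
  refine le_min (by linarith [Real.exp_pos (-z)]) ?_
  nlinarith [Real.add_one_le_exp (-z)]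

private lemma aux_exp_concave {u y : ℝ} (hu0 : 0 ≤ u) (hu1 : u ≤ 1) :
    u * (1 - Real.exp (-y)) ≤ 1 - Real.exp (-(u * y)) := by
  have h := convexOn_exp.2 (Set.mem_univ (-y)) (Set.mem_univ (0:ℝ)) hu0
    (by linarith : (0:ℝ) ≤ 1 - u) (by ring)
  simp only [smul_eq_mul, mul_zero, add_zero, Real.exp_zero, mul_one] at h
  have harg : u * -y = -(u * y) := by ring
  rw [harg] at h
  nlinarith [h]

private lemma aux_scale {c x : ℝ} (hc : 1 ≤ c) :
    1 - Real.exp (-(c * x)) ≤ c * (1 - Real.exp (-x)) := by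
  have hc0 : 0 < c := lt_of_lt_of_le one_pos hc
  have h := aux_exp_concave (u := 1/c) (y := c * x) (by positivity)
    (by rw [div_le_one hc0]; exact hc)
  have hx' : -(1 / c * (c * x)) = -x := by field_simp
  rw [hx'] at h
  have := mul_le_mul_of_nonneg_left h (le_of_lt hc0)
  calc 1 - Real.exp (-(c*x)) = c * (1/c * (1 - Real.exp (-(c * x)))) := by field_simp
    _ ≤ c * (1 - Real.exp (-x)) := this

private lemma aux_log {u q : ℝ} (hu : 0 < u) (huq : u ≤ q) (hq : q < 1) :
    q * (-Real.log (1 - u)) ≤ u * (-Real.log (1 - q)) := by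
  have hq0 : 0 < q := lt_of_lt_of_le hu huq
  have h1q : (0:ℝ) < 1 - q := by linarith
  have key := (strictConcaveOn_log_Ioi.concaveOn).2 (Set.mem_Ioi.mpr h1q)
    (Set.mem_Ioi.mpr one_pos) (show (0:ℝ) ≤ u/q by positivity)
    (show (0:ℝ) ≤ 1 - u/q by rw [sub_nonneg, div_le_one hq0]; exact huq)
    (show u/q + (1 - u/q) = 1 by ring)
  simp only [smul_eq_mul, mul_one, Real.log_one, mul_zero, add_zero] at key
  have harg : u/q * (1-q) + (1 - u/q) = 1 - u := by field_simp; ring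
  rw [harg] at key
  rw [div_mul_eq_mul_div, div_le_iff₀ hq0] at key
  nlinarith [key]

private lemma aux_min_bound {x y : ℝ} (hx : 0 ≤ x) (hy : 0 ≤ y) :
    min 1 (x * y) ≤ max 1 x * min 1 y := by
  have h0 : 0 ≤ min 1 y := le_min zero_le_one hy
  rcases le_total x 1 with h | h
  · have h1 : (1:ℝ) ≤ max 1 x := le_max_left _ _
    have h2 : min 1 (x*y) ≤ min 1 y := min_le_min le_rfl (by nlinarith)
    nlinarith
  · have hmax : max 1 x = x := max_eq_right h
    have : min 1 (x*y) ≤ min (x*1) (x*y) := min_le_min (by linarith) le_rfl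
    rw [hmax]
    calc min 1 (x*y) ≤ min (x*1) (x*y) := this
      _ = x * min 1 y := (mul_min_of_nonneg _ _ (by linarith)).symm

private lemma aux_integrable (ν : Measure ℝ)
    (hν : ∫⁻ y in Ioi (0:ℝ), ENNReal.ofReal (min 1 y) ∂ν ≠ ⊤)
    {f : ℝ → ℝ} (hf : Continuous f) {C : ℝ} (hC : 0 ≤ C)
    (hbd : ∀ y ∈ Ioi (0:ℝ), |f y| ≤ C * min 1 y) :
    IntegrableOn f (Ioi 0) ν := by
  refine ⟨hf.aestronglyMeasurable, ?_⟩
  rw [hasFiniteIntegral_iff_norm]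
  have hle : ∫⁻ y in Ioi (0:ℝ), ENNReal.ofReal ‖f y‖ ∂ν
      ≤ ∫⁻ y in Ioi (0:ℝ), ENNReal.ofReal C * ENNReal.ofReal (min 1 y) ∂ν := by
    refine lintegral_mono_ae ((ae_restrict_iff' measurableSet_Ioi).2 (ae_of_all _ fun y hy => ?_))
    rw [← ENNReal.ofReal_mul hC]
    exact ENNReal.ofReal_le_ofReal (by rw [Real.norm_eq_abs]; exact hbd y hy)
  refine lt_of_le_of_lt hle ?_
  rw [lintegral_const_mul' _ _ ENNReal.ofReal_ne_top]
  exact ENNReal.mul_lt_top ENNReal.ofReal_lt_top (lt_top_iff_ne_top.2 hν)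

private lemma aux_tsum_exp (x : ℝ) :
    ∑' n : ℕ, x ^ (n+1) / (Nat.factorial (n+1) : ℝ) = Real.exp x - 1 := by
  have h := Real.summable_pow_div_factorial x
  have he : Real.exp x = ∑' n : ℕ, x ^ n / (Nat.factorial n : ℝ) := by
    rw [Real.exp_eq_exp_ℝ, NormedSpace.exp_eq_tsum_div]
  rw [he, Summable.tsum_eq_zero_add h]
  simp

private lemma aux_integral_R {Ω : Type*} [MeasurableSpace Ω] (μ : Measure Ω)
    [IsProbabilityMeasure μ] (ν : Measure ℝ)
    (hν : ∫⁻ y in Ioi (0:ℝ), ENNReal.ofReal (min 1 y) ∂ν ≠ ⊤)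
    (b : ℝ) (c : ℕ → ℝ)
    (hc : ∀ m : ℕ, 1 ≤ m → c m =
      (1 / (Nat.factorial m : ℝ)) * ∫ y in Ioi (0:ℝ), y ^ m * Real.exp (-y) ∂ν
        + if m = 1 then b else 0)
    (hcnn : ∀ m : ℕ, 1 ≤ m → 0 ≤ c m)
    (X : Ω → ℕ) (hX : Measurable X) (hXpos : ∀ ω, 1 ≤ X ω)
    (hXlaw : ∀ m : ℕ, 1 ≤ m → μ {ω | X ω = m} = ENNReal.ofReal (c m))
    {t : ℝ} (ht : 0 < t) :
    ∫ ω, Real.exp (-t * (X ω : ℝ)) ∂μ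
      = b * Real.exp (-t)
        + ∫ y in Ioi (0:ℝ),
            (Real.exp (-(1 - Real.exp (-t)) * y) - Real.exp (-y)) ∂ν := by
  set s : ℝ := Real.exp (-t) with hs_def
  set u : ℝ := 1 - s with hu_def
  have hs0 : 0 < s := Real.exp_pos _
  have hs1 : s < 1 := by
    rw [hs_def, show (1:ℝ) = Real.exp 0 from (Real.exp_zero).symm]
    exact Real.exp_lt_exp.mpr (by linarith)
  have hu0 : 0 < u := by simp [hu_def]; linarith
  have hu1 : u < 1 := by simp [hu_def]; linarith
  set M : Measure ℕ := Measure.map X μ with hM_def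
  have : IsProbabilityMeasure M := Measure.isProbabilityMeasure_map hX.aemeasurable
  have hMa : ∀ a : ℕ, M {a} = μ {ω | X ω = a} := by
    intro a
    rw [hM_def, Measure.map_apply hX (measurableSet_singleton a)]
    congr 1
  have hM0 : M {0} = 0 := by
    rw [hMa 0]
    convert measure_empty (μ := μ)
    ext ω
    simp only [mem_setOf_eq, mem_empty_iff_false, iff_false]
    have := hXpos ω; omega
  -- step 1: integral as a tsum
  have hmeasℕ : ∀ g : ℕ → ℝ, Measurable g := fun g => measurable_from_top
  have hInt : Integrable (fun a : ℕ => Real.exp (-t * (a : ℝ))) M := by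
    refine Integrable.mono' (integrable_const 1)
      (hmeasℕ _).aestronglyMeasurable (ae_of_all _ fun a => ?_)
    rw [Real.norm_eq_abs, abs_of_pos (Real.exp_pos _)]
    refine Real.exp_le_one_iff.mpr ?_
    have : (0:ℝ) ≤ (a:ℝ) := Nat.cast_nonneg a
    nlinarith
  set w : ℕ → ℝ := fun a => (M {a}).toReal * Real.exp (-t * (a : ℝ)) with hw_def
  have hstep1 : ∫ ω, Real.exp (-t * (X ω : ℝ)) ∂μ = ∑' a : ℕ, w a := by
    have h := integral_map (μ := μ) (φ := X) hX.aemeasurable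
      (f := fun a : ℕ => Real.exp (-t * (a:ℝ))) (hmeasℕ _).aestronglyMeasurable
    rw [← hM_def] at h
    rw [← h, integral_countable' hInt]
    exact tsum_congr fun a => by rw [smul_eq_mul]; rfl
  -- step 2: summability of w
  have hw_nonneg : ∀ a, 0 ≤ w a := fun a =>
    mul_nonneg ENNReal.toReal_nonneg (Real.exp_pos _).le
  have hw_le : ∀ a, w a ≤ s ^ a := by
    intro a
    have h1 : (M {a}).toReal ≤ 1 := by
      have h2 : M {a} ≤ 1 := prob_le_one
      calc (M {a}).toReal ≤ (1 : ℝ≥0∞).toReal :=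
            ENNReal.toReal_mono ENNReal.one_ne_top h2
        _ = 1 := by simp
    have h3 : Real.exp (-t * (a:ℝ)) = s ^ a := by
      rw [show -t * (a:ℝ) = (a:ℝ) * (-t) by ring, ← Real.exp_nat_mul]
    rw [hw_def]
    calc (M {a}).toReal * Real.exp (-t * (a:ℝ)) ≤ 1 * Real.exp (-t * (a:ℝ)) :=
          mul_le_mul_of_nonneg_right h1 (Real.exp_pos _).le
      _ = s ^ a := by rw [one_mul, h3]
  have hwsum : Summable w :=
    Summable.of_nonneg_of_le hw_nonneg hw_le (summable_geometric_of_lt_one hs0.le hs1)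
  -- step 3: split the shifted sum
  set A : ℕ → ℝ := fun a => Real.exp (-t * ((a:ℝ)+1)) *
    ((1 / (Nat.factorial (a+1) : ℝ)) * ∫ y in Ioi (0:ℝ), y ^ (a+1) * Real.exp (-y) ∂ν)
    with hA_def
  set B : ℕ → ℝ := fun a => if a = 0 then b * s else 0 with hB_def
  have hwa : ∀ a : ℕ, w (a+1) = A a + B a := by
    intro a
    have hMm : (M {a+1}).toReal = c (a+1) := by
      rw [hMa (a+1), hXlaw (a+1) (by omega), ENNReal.toReal_ofReal (hcnn (a+1) (by omega))]
    rw [hw_def]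
    simp only []
    rw [hMm, hc (a+1) (by omega)]
    push_cast
    rcases Nat.eq_zero_or_pos a with ha | ha
    · subst ha
      simp [hA_def, hB_def, hs_def]
      ring
    · have h1 : a + 1 ≠ 1 := by omega
      have h0 : a ≠ 0 := by omega
      simp [hA_def, hB_def, h1, h0]
      ring
  have hB : Summable B := by
    refine summable_of_ne_finset_zero (s := {0}) fun a ha => ?_
    simp only [Finset.mem_singleton] at ha
    simp [hB_def, ha]
  have htsB : ∑' a, B a = b * s := tsum_ite_eq 0 (fun _ => b * s)
  have hwshift : Summable (fun a => w (a+1)) := (summable_nat_add_iff 1).mpr hwsum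
  have hA : Summable A := by
    have h1 : Summable (fun a => w (a+1) - B a) := hwshift.sub hB
    have h2 : A = fun a => w (a+1) - B a := funext fun a => by rw [hwa a]; ring
    rw [h2]; exact h1
  have hstep3 : ∑' a : ℕ, w a = (∑' a, A a) + b * s := by
    rw [Summable.tsum_eq_zero_add hwsum]
    have hw0 : w 0 = 0 := by simp [hw_def, hM0]
    rw [hw0, zero_add, tsum_congr hwa, Summable.tsum_add hA hB, htsB]
  -- step 4: the series of integrals
  set G : ℕ → ℝ → ℝ := fun a y => (s*y) ^ (a+1) / (Nat.factorial (a+1) : ℝ) * Real.exp (-y)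
    with hG_def
  have hGcont : ∀ a, Continuous (G a) := by
    intro a
    rw [hG_def]
    fun_prop
  have hGnn : ∀ (a : ℕ) (y : ℝ), 0 ≤ y → 0 ≤ G a y := by
    intro a y hy
    have h1 : 0 ≤ s * y := mul_nonneg hs0.le hy
    rw [hG_def]
    positivity
  have hGsum_y : ∀ y : ℝ, Summable (fun a => G a y) := by
    intro y
    have h1 : Summable (fun n : ℕ => (s*y) ^ n / (Nat.factorial n : ℝ)) :=
      Real.summable_pow_div_factorial (s*y)
    have h2 : Summable (fun n : ℕ => (s*y) ^ (n+1) / (Nat.factorial (n+1) : ℝ)) :=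
      (summable_nat_add_iff 1).mpr h1
    exact h2.mul_right _
  have hGtsum : ∀ y : ℝ, ∑' a, G a y = Real.exp (-(u*y)) - Real.exp (-y) := by
    intro y
    rw [hG_def]
    simp only []
    rw [tsum_mul_right, aux_tsum_exp (s*y), sub_mul, one_mul, ← Real.exp_add]
    congr 2
    rw [hu_def]; ring
  have hAG : ∀ a, A a = ∫ y in Ioi (0:ℝ), G a y ∂ν := by
    intro a
    have hconst : A a = (s ^ (a+1) * (1 / (Nat.factorial (a+1) : ℝ)))
        * ∫ y in Ioi (0:ℝ), y ^ (a+1) * Real.exp (-y) ∂ν := by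
      rw [hA_def]
      simp only []
      rw [show -t * ((a:ℝ)+1) = (((a+1:ℕ)):ℝ) * (-t) by push_cast; ring, Real.exp_nat_mul]
      ring
    rw [hconst, ← integral_const_mul _ _]
    congr 1
    funext y
    rw [hG_def]
    simp only []
    rw [mul_pow]
    ring
  have hGmeas : ∀ a, AEStronglyMeasurable (G a) (ν.restrict (Ioi 0)) :=
    fun a => (hGcont a).aestronglyMeasurable
  have hGfin : ∑' a, ∫⁻ y, ‖G a y‖₊ ∂(ν.restrict (Ioi 0)) ≠ ⊤ := by
    rw [← lintegral_tsum (fun a => ((hGcont a).measurable.nnnorm.coe_nnreal_ennreal).aemeasurable)]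
    refine ne_top_of_le_ne_top hν (lintegral_mono_ae
      ((ae_restrict_iff' measurableSet_Ioi).2 (ae_of_all _ fun y hy => ?_)))
    have hy0 : (0:ℝ) < y := hy
    have hnn : ∀ a, 0 ≤ G a y := fun a => hGnn a y hy0.le
    have h1 : ∀ a, (‖G a y‖₊ : ℝ≥0∞) = ENNReal.ofReal (G a y) := fun a => by
      rw [Real.nnnorm_of_nonneg (hnn a), ENNReal.ofReal_eq_coe_nnreal (hnn a)]
    calc ∑' a, (‖G a y‖₊ : ℝ≥0∞) = ∑' a, ENNReal.ofReal (G a y) := tsum_congr h1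
      _ = ENNReal.ofReal (∑' a, G a y) :=
          (ENNReal.ofReal_tsum_of_nonneg hnn (hGsum_y y)).symm
      _ ≤ ENNReal.ofReal (min 1 y) := by
          refine ENNReal.ofReal_le_ofReal ?_
          rw [hGtsum y]
          have h2 : Real.exp (-(u*y)) * Real.exp (-(s*y)) = Real.exp (-y) := by
            rw [← Real.exp_add]
            congr 1
            rw [hu_def]; ring
          have h3 : Real.exp (-(u*y)) ≤ 1 :=
            Real.exp_le_one_iff.mpr (by nlinarith)
          have h4 : Real.exp (-(s*y)) ≤ 1 :=
            Real.exp_le_one_iff.mpr (by nlinarith)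
          have h5 : Real.exp (-(u*y)) - Real.exp (-y) ≤ 1 - Real.exp (-(s*y)) := by
            nlinarith [Real.exp_pos (-(s*y)), Real.exp_pos (-(u*y))]
          have h6 : 1 - Real.exp (-(s*y)) ≤ min 1 (s*y) :=
            aux_one_sub_exp_le_min (by nlinarith)
          have h7 : min 1 (s*y) ≤ min 1 y := min_le_min le_rfl (by nlinarith)
          linarith
  have hstep4 : ∑' a, A a
      = ∫ y in Ioi (0:ℝ), (Real.exp (-(u*y)) - Real.exp (-y)) ∂ν := by
    rw [tsum_congr hAG, ← integral_tsum hGmeas hGfin]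
    refine integral_congr_ae (ae_of_all _ fun y => ?_)
    simpa using hGtsum y
  -- conclusion
  rw [hstep1, hstep3, hstep4]
  rw [add_comm]
  congr 1
  refine integral_congr_ae (ae_of_all _ fun y => ?_)
  simp only [neg_mul]

theorem laplace_transform_Tn (b : ℝ) (hb : 0 ≤ b) (ν : Measure ℝ)
    (hν : ∫⁻ y in Ioi (0:ℝ), ENNReal.ofReal (min 1 y) ∂ν ≠ ⊤)
    (φ : ℝ → ℝ)
    (hφ : ∀ x : ℝ, 0 ≤ x → φ x = b * x + ∫ y in Ioi (0:ℝ), (1 - Real.exp (-x * y)) ∂ν)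
    (hφ1 : φ 1 = 1)
    (c : ℕ → ℝ)
    (hc : ∀ m : ℕ, 1 ≤ m → c m =
      (1 / (Nat.factorial m : ℝ)) * ∫ y in Ioi (0:ℝ), y ^ m * Real.exp (-y) ∂ν
        + if m = 1 then b else 0)
    {Ω : Type*} [MeasurableSpace Ω] (μ : Measure Ω) [IsProbabilityMeasure μ]
    (R : ℕ → Ω → ℕ) (hR : ∀ k, Measurable (R k))
    (hRindep : iIndepFun R μ)
    (hRpos : ∀ k ω, 1 ≤ R k ω)
    (hRlaw : ∀ k, ∀ m : ℕ, 1 ≤ m → μ {ω | R k ω = m} = ENNReal.ofReal (c m))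
    (T : ℕ → Ω → ℕ) (hT : ∀ n ω, T n ω = ∑ k ∈ Finset.range n, R k ω) :
    ∀ t : ℝ, 0 ≤ t → ∀ n : ℕ,
      ∫ ω, Real.exp (-t * (T n ω : ℝ)) ∂μ ≤ Real.exp (-(n : ℝ) * φ t) := by
  have hcnn : ∀ m : ℕ, 1 ≤ m → 0 ≤ c m := by
    intro m hm
    rw [hc m hm]
    have h1 : 0 ≤ ∫ y in Ioi (0:ℝ), y ^ m * Real.exp (-y) ∂ν :=
      setIntegral_nonneg measurableSet_Ioi fun y hy => by
        have : (0:ℝ) < y := hy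
        positivity
    have h2 : (0:ℝ) ≤ if m = 1 then b else 0 := by split <;> simp [hb]
    have h3 : (0:ℝ) ≤ 1 / (Nat.factorial m : ℝ) := by positivity
    exact add_nonneg (mul_nonneg h3 h1) h2
  have hint : ∀ x : ℝ, 0 ≤ x → IntegrableOn (fun y => 1 - Real.exp (-x * y)) (Ioi 0) ν := by
    intro x hx
    refine aux_integrable ν hν (by fun_prop) (C := max 1 x)
      (le_trans zero_le_one (le_max_left _ _)) fun y hy => ?_
    have hy0 : (0:ℝ) < y := hy
    have hxy : 0 ≤ x * y := by positivity
    have hexp : Real.exp (-x*y) ≤ 1 := Real.exp_le_one_iff.mpr (by nlinarith)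
    rw [abs_of_nonneg (by linarith)]
    calc 1 - Real.exp (-x*y) = 1 - Real.exp (-(x*y)) := by rw [neg_mul]
      _ ≤ min 1 (x*y) := aux_one_sub_exp_le_min hxy
      _ ≤ max 1 x * min 1 y := aux_min_bound hx hy0.le
  have hb1 : b + (∫ y in Ioi (0:ℝ), (1 - Real.exp (-1 * y)) ∂ν) = 1 := by
    have h := hφ 1 zero_le_one
    rw [hφ1] at h
    linarith [h]
  intro t ht n
  rcases eq_or_lt_of_le ht with h0 | h0
  · have hφ0 : φ 0 = 0 := by
      rw [hφ 0 le_rfl]; simp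
    rw [← h0]
    simp [hφ0]
  · set s : ℝ := Real.exp (-t) with hs_def
    set u : ℝ := 1 - s with hu_def
    have hs0 : 0 < s := Real.exp_pos _
    have hs1 : s < 1 := by
      rw [hs_def, show (1:ℝ) = Real.exp 0 from (Real.exp_zero).symm]
      exact Real.exp_lt_exp.mpr (by linarith)
    have hu0 : 0 < u := by simp [hu_def]; linarith
    have hu1 : u < 1 := by simp [hu_def]; linarith
    have hut : u ≤ t := by
      have h1 := aux_one_sub_exp_le_min (le_of_lt h0)
      have h2 : min 1 t ≤ t := min_le_right _ _
      rw [hu_def, hs_def]; linarith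
    set X : ℕ → Ω → ℝ := fun k ω => (R k ω : ℝ) with hX_def
    have hXmeas : ∀ k, Measurable (X k) := fun k => measurable_from_top.comp (hR k)
    have hXindep : iIndepFun X μ :=
      hRindep.comp (fun _ (a : ℕ) => (a : ℝ)) (fun _ => measurable_from_top)
    have hmgf : ∀ k, mgf (X k) μ (-t)
        = b * s + ∫ y in Ioi (0:ℝ), (Real.exp (-u * y) - Real.exp (-y)) ∂ν := by
      intro k
      exact aux_integral_R μ ν hν b c hc hcnn (R k) (hR k) (hRpos k) (hRlaw k) h0
    clear_value X
    have hIone : ∀ k, mgf (X k) μ (-t) = 1 - φ u := by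
      intro k
      have hsub : ∫ y in Ioi (0:ℝ), (Real.exp (-u * y) - Real.exp (-y)) ∂ν
          = (∫ y in Ioi (0:ℝ), (1 - Real.exp (-1 * y)) ∂ν)
            - ∫ y in Ioi (0:ℝ), (1 - Real.exp (-u * y)) ∂ν := by
        rw [← integral_sub (hint 1 zero_le_one) (hint u hu0.le)]
        refine integral_congr_ae (ae_of_all _ fun y => ?_)
        simp only [neg_one_mul]
        ring
      have hφu := hφ u hu0.le
      have hsu : s = 1 - u := by rw [hu_def]; ring
      rw [hmgf k, hsub, hφu, hsu]
      linarith [hb1]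
    have hphiu : u ≤ φ u := by
      rw [hφ u hu0.le]
      have hmono : u * (∫ y in Ioi (0:ℝ), (1 - Real.exp (-1 * y)) ∂ν)
          ≤ ∫ y in Ioi (0:ℝ), (1 - Real.exp (-u * y)) ∂ν := by
        rw [← integral_const_mul]
        refine setIntegral_mono_on ((hint 1 zero_le_one).const_mul u) (hint u hu0.le)
          measurableSet_Ioi fun y hy => ?_
        have h := aux_exp_concave (u := u) (y := y) hu0.le hu1.le
        rw [neg_one_mul, neg_mul]
        exact h
      nlinarith [hb1, hmono]
    have hIle : 1 - φ u ≤ Real.exp (-φ t) := by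
      by_cases hq : φ u < 1
      · have hq0 : 0 < φ u := lt_of_lt_of_le hu0 hphiu
        have hlog : Real.log (1 - u) = -t := by
          rw [show 1 - u = s by rw [hu_def]; ring, hs_def, Real.log_exp]
        have h3 : φ t ≤ (t / u) * φ u := by
          rw [hφ t ht, hφ u hu0.le]
          have hc1 : 1 ≤ t / u := (one_le_div hu0).mpr hut
          have hmono2 : ∫ y in Ioi (0:ℝ), (1 - Real.exp (-t * y)) ∂ν
              ≤ (t / u) * ∫ y in Ioi (0:ℝ), (1 - Real.exp (-u * y)) ∂ν := by
            rw [← integral_const_mul]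
            refine setIntegral_mono_on (hint t ht) ((hint u hu0.le).const_mul _)
              measurableSet_Ioi fun y hy => ?_
            have heq : -t * y = -((t / u) * (u * y)) := by
              field_simp
            rw [heq]
            have h := aux_scale (c := t / u) (x := u * y) hc1
            rw [show -(u * y) = -u * y by ring] at h
            exact h
          have hbt : b * t = t / u * (b * u) := by field_simp
          linarith [hmono2]
        have h4 : (t / u) * φ u ≤ -Real.log (1 - φ u) := by
          have hlem := aux_log hu0 hphiu hq
          rw [hlog, neg_neg] at hlem
          rw [div_mul_eq_mul_div, div_le_iff₀ hu0]
          nlinarith [hlem]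
        have h5 : (0:ℝ) < 1 - φ u := by linarith
        calc 1 - φ u = Real.exp (Real.log (1 - φ u)) := (Real.exp_log h5).symm
          _ ≤ Real.exp (-φ t) := Real.exp_le_exp.mpr (by
              have h6 : φ t ≤ -Real.log (1 - φ u) := le_trans h3 h4
              linarith)
      · push_neg at hq
        have h7 : 1 - φ u ≤ 0 := by linarith
        linarith [Real.exp_pos (-φ t)]
    have hL : ∫ ω, Real.exp (-t * (T n ω : ℝ)) ∂μ
        = mgf (∑ k ∈ Finset.range n, X k) μ (-t) := by
      have hR' : mgf (∑ k ∈ Finset.range n, X k) μ (-t)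
          = ∫ ω, Real.exp ((-t) * (∑ k ∈ Finset.range n, X k) ω) ∂μ := rfl
      rw [hR']
      have harg : ∀ ω, -t * ((T n ω : ℕ) : ℝ) = (-t) * (∑ k ∈ Finset.range n, X k) ω := by
        intro ω
        rw [hT n ω, Finset.sum_apply]
        simp only [hX_def]
        push_cast
        ring
      exact integral_congr_ae (ae_of_all _ fun ω => congrArg Real.exp (harg ω))
    rw [hL, hXindep.mgf_sum hXmeas (Finset.range n)]
    have hprod : ∏ k ∈ Finset.range n, mgf (X k) μ (-t) = (1 - φ u) ^ n := by
      rw [Finset.prod_congr rfl (fun k _ => hIone k), Finset.prod_const, Finset.card_range]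
    rw [hprod]
    have hnn : 0 ≤ 1 - φ u := by
      have h := mgf_nonneg (X := X 0) (μ := μ) (t := -t)
      rw [hIone 0] at h
      exact h
    calc (1 - φ u) ^ n ≤ (Real.exp (-φ t)) ^ n := pow_le_pow_left₀ hnn hIle n
      _ = Real.exp (-(n : ℝ) * φ t) := by
          rw [← Real.exp_nat_mul]
          congr 1
          ring
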